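/- Two sequences of cardinals (λ_n)_n and (μ_n)_n satisfy (λ_n) ≈ (μ_n) if and only if: (1) (λ_n) is eventually zero iff (μ_n) is; (2) for every infinite cardinal κ, (λ_n) is eventually < κ iff (μ_n) is; and (3) for each M ∈ ℕ there exists M' with Σ_{n≤M} λ_n ≤ Σ_{n≤M'} μ_n and Σ_{n≤M} μ_n ≤ Σ_{n≤M'} λ_n. -/

import Mathlib

open Cardinal Function Set

universe u

def CardSeqEquiv (l m : ℕ → Cardinal) : Prop :=
  ∃ f : (Σ n : ℕ, Quotient.out (l n)) ≃ (Σ n : ℕ, Quotient.out (m n)),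
    ∀ M : ℕ, ∃ M' : ℕ,
      (∀ p : Σ n : ℕ, Quotient.out (l n), p.1 ≤ M → (f p).1 ≤ M') ∧
      (∀ q : Σ n : ℕ, Quotient.out (m n), q.1 ≤ M → (f.symm q).1 ≤ M')

/-! ### Auxiliary lemmas -/

/-- Schröder–Bernstein with pointwise control on the resulting bijection. -/
theorem my_sb {α : Type u} {β : Type u} {f : α → β} {g : β → α} (hf : Function.Injective f)
    (hg : Function.Injective g) : ∃ e : α ≃ β, ∀ a, e a = f a ∨ g (e a) = a := by
  classical
  cases' isEmpty_or_nonempty β with hβ hβ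
  · have : IsEmpty α := Function.isEmpty f
    exact ⟨(Equiv.equivEmpty α).trans (Equiv.equivEmpty β).symm, fun a => (this.false a).elim⟩
  set F : Set α →o Set α :=
    { toFun := fun s => (g '' (f '' s)ᶜ)ᶜ
      monotone' := fun s t hst =>
        compl_subset_compl.mpr <| image_mono <| compl_subset_compl.mpr <| image_mono hst }
  set s : Set α := F.lfp
  have hs : (g '' (f '' s)ᶜ)ᶜ = s := F.map_lfp
  have hns : g '' (f '' s)ᶜ = sᶜ := compl_injective (by simp [hs])
  set g' := invFun g
  have g'g : LeftInverse g' g := leftInverse_invFun hg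
  have hg'ns : g' '' sᶜ = (f '' s)ᶜ := by rw [← hns, g'g.image_image]
  set h : α → β := s.piecewise f g'
  have hsurj : Surjective h := by rw [← range_eq_univ, range_piecewise, hg'ns, union_compl_self]
  have hinj : Injective h := by
    refine (injective_piecewise_iff _).2 ⟨hf.injOn, ?_, ?_⟩
    · intro x hx y hy hxy
      obtain ⟨x', _, rfl⟩ : x ∈ g '' (f '' s)ᶜ := by rwa [hns]
      obtain ⟨y', _, rfl⟩ : y ∈ g '' (f '' s)ᶜ := by rwa [hns]
      rw [g'g _, g'g _] at hxy
      rw [hxy]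
    · intro x hx y hy hxy
      obtain ⟨y', hy', rfl⟩ : y ∈ g '' (f '' s)ᶜ := by rwa [hns]
      rw [g'g _] at hxy
      exact hy' ⟨x, hx, hxy⟩
  refine ⟨Equiv.ofBijective h ⟨hinj, hsurj⟩, fun a => ?_⟩
  show h a = f a ∨ g (h a) = a
  by_cases ha : a ∈ s
  · left; exact Set.piecewise_eq_of_mem _ _ _ ha
  · right
    have hh : h a = g' a := Set.piecewise_eq_of_notMem _ _ _ ha
    rw [hh]
    obtain ⟨b, _, rfl⟩ : a ∈ g '' (f '' s)ᶜ := by rwa [hns]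
    rw [g'g b]

lemma mk_fiber_eq {A : ℕ → Type u} (a : ℕ) :
    #{p : Σ n : ℕ, A n // p.1 = a} = #(A a) := by
  refine (Cardinal.mk_congr (Equiv.ofBijective
    (fun x : A a => (⟨⟨a, x⟩, rfl⟩ : {p : Σ n : ℕ, A n // p.1 = a})) ⟨?_, ?_⟩)).symm
  · intro x y hxy
    simpa using hxy
  · rintro ⟨⟨n, x⟩, rfl⟩
    exact ⟨x, rfl⟩

lemma mk_part (l : ℕ → Cardinal.{u}) (s : Finset ℕ) :
    #{p : Σ n : ℕ, Quotient.out (l n) // p.1 ∈ s} = ∑ n ∈ s, l n := by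
  classical
  induction s using Finset.induction_on with
  | empty =>
      simp only [Finset.notMem_empty, Finset.sum_empty]
      exact Cardinal.mk_eq_zero_iff.2 ⟨fun p => p.2⟩
  | @insert a s ha ih =>
      have hdisj : Disjoint {p : Σ n : ℕ, Quotient.out (l n) | p.1 = a} {p | p.1 ∈ s} := by
        rw [Set.disjoint_left]
        rintro p (rfl : p.1 = a) hp
        exact ha hp
      calc #{p : Σ n : ℕ, Quotient.out (l n) // p.1 ∈ insert a s}
          = #(↥({p : Σ n : ℕ, Quotient.out (l n) | p.1 = a} ∪ {p | p.1 ∈ s})) := by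
            refine Cardinal.mk_congr (Equiv.subtypeEquivRight ?_)
            intro p; simp [Finset.mem_insert]
        _ = #{p : Σ n : ℕ, Quotient.out (l n) | p.1 = a}
            + #{p : Σ n : ℕ, Quotient.out (l n) | p.1 ∈ s} :=
            Cardinal.mk_union_of_disjoint hdisj
        _ = ∑ n ∈ insert a s, l n := by
            rw [Finset.sum_insert ha, ← ih]
            congr 1
            rw [show #{p : Σ n : ℕ, Quotient.out (l n) | p.1 = a}
                = #{p : Σ n : ℕ, Quotient.out (l n) // p.1 = a} from rfl, mk_fiber_eq,
              Cardinal.mk_out]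

lemma mk_prefix (l : ℕ → Cardinal.{u}) (M : ℕ) :
    #{p : Σ n : ℕ, Quotient.out (l n) // p.1 ≤ M} = ∑ n ∈ Finset.range (M + 1), l n := by
  rw [← mk_part l (Finset.range (M + 1))]
  exact Cardinal.mk_congr
    (Equiv.subtypeEquivRight fun p => by simp [Finset.mem_range, Nat.lt_succ_iff])

lemma finsetSum_lt {κ : Cardinal.{u}} (hκ : Cardinal.aleph0 ≤ κ) (s : Finset ℕ)
    (f : ℕ → Cardinal.{u}) (h : ∀ j ∈ s, f j < κ) : ∑ j ∈ s, f j < κ := by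
  classical
  induction s using Finset.induction_on with
  | empty => simpa using lt_of_lt_of_le Cardinal.aleph0_pos hκ
  | @insert a s ha ih =>
      rw [Finset.sum_insert ha]
      exact Cardinal.add_lt_of_lt hκ (h a (Finset.mem_insert_self a s))
        (ih fun j hj => h j (Finset.mem_insert_of_mem hj))

/-! ### Forward direction helpers -/

lemma CardSeqEquiv.symm' {l m : ℕ → Cardinal.{u}} (h : CardSeqEquiv l m) : CardSeqEquiv m l := by
  obtain ⟨f, hf⟩ := h
  refine ⟨f.symm, fun M => ?_⟩
  obtain ⟨M', h1, h2⟩ := hf M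
  exact ⟨M', h2, by simpa using h1⟩

lemma fwd_zero {l m : ℕ → Cardinal.{u}} (h : CardSeqEquiv l m)
    (hl : ∃ N, ∀ n ≥ N, l n = 0) : ∃ N, ∀ n ≥ N, m n = 0 := by
  obtain ⟨f, hf⟩ := h
  obtain ⟨N, hN⟩ := hl
  obtain ⟨M', h1, _⟩ := hf N
  refine ⟨M' + 1, fun n hn => ?_⟩
  rw [← Cardinal.mk_out (m n), Cardinal.mk_eq_zero_iff]
  constructor
  intro x
  have hp : (f.symm ⟨n, x⟩).1 ≤ N := by
    by_contra hc
    have h0 : l (f.symm ⟨n, x⟩).1 = 0 := hN _ (le_of_not_ge hc)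
    exact (Cardinal.mk_eq_zero_iff.1 (by rw [Cardinal.mk_out]; exact h0)).false (f.symm ⟨n, x⟩).2
  have hb := h1 _ hp
  rw [Equiv.apply_symm_apply] at hb
  have : n ≤ M' := hb
  omega

lemma fwd_kappa {l m : ℕ → Cardinal.{u}} (h : CardSeqEquiv l m) {κ : Cardinal.{u}}
    (hκ : Cardinal.aleph0 ≤ κ) (hl : ∃ N, ∀ n ≥ N, l n < κ) : ∃ N, ∀ n ≥ N, m n < κ := by
  obtain ⟨f, hf⟩ := h
  obtain ⟨N, hN⟩ := hl
  obtain ⟨M', h1, _⟩ := hf N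
  refine ⟨M' + 1, fun n hn => ?_⟩
  obtain ⟨M'', _, h2⟩ := hf n
  have key : m n ≤ ∑ j ∈ Finset.Ioc N M'', l j := by
    rw [← mk_part l (Finset.Ioc N M''), ← Cardinal.mk_out (m n)]
    refine Cardinal.mk_le_of_injective (f := fun x : Quotient.out (m n) =>
      (⟨f.symm ⟨n, x⟩, ?_⟩ : {p : Σ k : ℕ, Quotient.out (l k) // p.1 ∈ Finset.Ioc N M''})) ?_
    · rw [Finset.mem_Ioc]
      constructor
      · by_contra hc
        have hle : (f.symm ⟨n, x⟩).1 ≤ N := by omega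
        have hb := h1 _ hle
        rw [Equiv.apply_symm_apply] at hb
        have : n ≤ M' := hb
        omega
      · exact h2 ⟨n, x⟩ le_rfl
    · intro x y hxy
      have h3 : f.symm ⟨n, x⟩ = f.symm ⟨n, y⟩ := congrArg Subtype.val hxy
      have h4 := f.symm.injective h3
      exact eq_of_heq (Sigma.mk.inj_iff.1 h4).2
  refine lt_of_le_of_lt key (finsetSum_lt hκ _ _ fun j hj => ?_)
  exact hN j (le_of_lt (Finset.mem_Ioc.1 hj).1)

lemma fwd_sum {l m : ℕ → Cardinal.{u}} (h : CardSeqEquiv l m) (M : ℕ) :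
    ∃ M', (∑ n ∈ Finset.range (M + 1), l n) ≤ (∑ n ∈ Finset.range (M' + 1), m n) ∧
      (∑ n ∈ Finset.range (M + 1), m n) ≤ (∑ n ∈ Finset.range (M' + 1), l n) := by
  obtain ⟨f, hf⟩ := h
  obtain ⟨M', h1, h2⟩ := hf M
  refine ⟨M', ?_, ?_⟩
  · rw [← mk_prefix, ← mk_prefix]
    exact Cardinal.mk_le_of_injective
      (f := fun x : {p : Σ n : ℕ, Quotient.out (l n) // p.1 ≤ M} =>
        (⟨f x.1, h1 x.1 x.2⟩ : {q : Σ n : ℕ, Quotient.out (m n) // q.1 ≤ M'}))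
      (fun x y hxy => Subtype.ext (f.injective (congrArg Subtype.val hxy)))
  · rw [← mk_prefix, ← mk_prefix]
    exact Cardinal.mk_le_of_injective
      (f := fun x : {q : Σ n : ℕ, Quotient.out (m n) // q.1 ≤ M} =>
        (⟨f.symm x.1, h2 x.1 x.2⟩ : {p : Σ n : ℕ, Quotient.out (l n) // p.1 ≤ M'}))
      (fun x y hxy => Subtype.ext (f.symm.injective (congrArg Subtype.val hxy)))

/-! ### Backward direction -/

lemma claim_plus {l m : ℕ → Cardinal.{u}}
    (hzz : (∃ N, ∀ n ≥ N, m n = 0) → (∃ N, ∀ n ≥ N, l n = 0))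
    (hk : ∀ κ : Cardinal.{u}, Cardinal.aleph0 ≤ κ →
      (∃ N, ∀ n ≥ N, m n < κ) → (∃ N, ∀ n ≥ N, l n < κ)) :
    ∃ N, ∀ n ≥ N, ∀ b, ∃ g, l n ≤ ∑ j ∈ Finset.Ioc b g, m j := by
  classical
  by_cases hlz : ∃ N, ∀ n ≥ N, l n = 0
  · obtain ⟨N, hN⟩ := hlz
    exact ⟨N, fun n hn b => ⟨b, by simp [hN n hn]⟩⟩
  · have hmz : ∀ N, ∃ n, n ≥ N ∧ m n ≠ 0 := by
      by_contra hc
      push_neg at hc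
      obtain ⟨N, hN⟩ := hc
      exact hlz (hzz ⟨N, fun n hn => hN n hn⟩)
    set P : ℕ → ℕ → Cardinal.{u} := fun b g => ∑ j ∈ Finset.Ioc b g, m j with hP
    set τ : ℕ → Cardinal.{u} := fun b => ⨆ g, P b g with hτ
    have hPle : ∀ b g, P b g ≤ τ b := fun b g => le_ciSup (Cardinal.bddAbove_range _) g
    have hτmono : ∀ b b', b ≤ b' → τ b' ≤ τ b := by
      intro b b' hbb
      refine ciSup_le fun g => le_trans ?_ (hPle b g)
      exact Finset.sum_le_sum_of_subset (Finset.Ioc_subset_Ioc_left hbb)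
    have hsingle : ∀ b j, b < j → m j ≤ P b j := by
      intro b j hbj
      exact Finset.single_le_sum (fun i _ => zero_le) (Finset.mem_Ioc.2 ⟨hbj, le_rfl⟩)
    have hgrow : ∀ (b k : ℕ), ∃ g, (k : Cardinal) ≤ P b g := by
      intro b k
      induction k with
      | zero => exact ⟨b, by simp⟩
      | succ k ih =>
          obtain ⟨g, hg⟩ := ih
          obtain ⟨j, hj, hjne⟩ := hmz (max g b + 1)
          have hgj : max g b ≤ j := by omega
          have hbg : b ≤ max g b := le_max_right _ _
          have hsplit : P b (max g b) + P (max g b) j = P b j :=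
            Finset.sum_Ioc_consecutive _ hbg hgj
          have h1 : (k : Cardinal) ≤ P b (max g b) :=
            hg.trans (Finset.sum_le_sum_of_subset (Finset.Ioc_subset_Ioc_right (le_max_left _ _)))
          have h2 : (1 : Cardinal) ≤ P (max g b) j := by
            refine le_trans (Cardinal.one_le_iff_ne_zero.2 hjne) ?_
            exact Finset.single_le_sum (fun i _ => zero_le) (Finset.mem_Ioc.2 ⟨by omega, le_rfl⟩)
          refine ⟨j, ?_⟩
          have hcast : ((k + 1 : ℕ) : Cardinal) = (k : Cardinal) + 1 := by push_cast; ring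
          rw [hcast, ← hsplit]
          exact add_le_add h1 h2
    have hτinf : ∀ b, Cardinal.aleph0 ≤ τ b := by
      intro b
      rw [Cardinal.aleph0_le]
      intro k
      obtain ⟨g, hg⟩ := hgrow b k
      exact hg.trans (hPle b g)
    obtain ⟨τ0, ⟨B₀, rfl⟩, hmin⟩ :=
      Cardinal.lt_wf.has_min (Set.range τ) ⟨τ 0, Set.mem_range_self 0⟩
    have hτ0le : ∀ b, τ B₀ ≤ τ b := fun b => le_of_not_gt (hmin (τ b) (Set.mem_range_self b))
    by_cases hc : ∃ J, ∀ j ≥ J, m j < τ B₀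
    · obtain ⟨N, hN⟩ := hk (τ B₀) (hτinf B₀) hc
      refine ⟨N, fun n hn b => ?_⟩
      have hlt : l n < τ b := lt_of_lt_of_le (hN n hn) (hτ0le b)
      rw [hτ, lt_ciSup_iff (Cardinal.bddAbove_range _)] at hlt
      obtain ⟨g, hg⟩ := hlt
      exact ⟨g, hg.le⟩
    · push_neg at hc
      have hmle : ∀ j ≥ B₀ + 1, m j < Order.succ (τ B₀) := by
        intro j hj
        rw [Order.lt_succ_iff]
        calc m j ≤ P (j - 1) j := hsingle _ _ (by omega)
          _ ≤ τ (j - 1) := hPle _ _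
          _ ≤ τ B₀ := hτmono _ _ (by omega)
      obtain ⟨N, hN⟩ := hk (Order.succ (τ B₀))
        ((hτinf B₀).trans (Order.le_succ _)) ⟨B₀ + 1, hmle⟩
      refine ⟨N, fun n hn b => ?_⟩
      obtain ⟨j, hj, hjτ⟩ := hc (b + 1)
      refine ⟨j, ?_⟩
      calc l n ≤ τ B₀ := Order.lt_succ_iff.1 (hN n hn)
        _ ≤ m j := hjτ
        _ ≤ P b j := hsingle _ _ (by omega)

def GoodMap (l m : ℕ → Cardinal.{u})
    (u : (Σ n : ℕ, Quotient.out (l n)) → (Σ n : ℕ, Quotient.out (m n))) : Prop :=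
  Function.Injective u ∧
    ∀ M, ∃ M', ∀ p, (p.1 ≤ M → (u p).1 ≤ M') ∧ ((u p).1 ≤ M → p.1 ≤ M')

lemma exists_goodMap {l m : ℕ → Cardinal.{u}}
    (hfit : ∃ N, ∀ n ≥ N, ∀ b, ∃ g, l n ≤ ∑ j ∈ Finset.Ioc b g, m j)
    (hpre : ∀ M, ∃ M', (∑ n ∈ Finset.range (M + 1), l n) ≤ ∑ n ∈ Finset.range (M' + 1), m n) :
    ∃ u : (Σ n : ℕ, Quotient.out (l n)) → (Σ n : ℕ, Quotient.out (m n)), GoodMap l m u := by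
  classical
  obtain ⟨N, hN⟩ := hfit
  obtain ⟨b0, hb0⟩ := hpre N
  set b : ℕ → ℕ := fun k =>
    Nat.rec b0 (fun k bk => max (bk + 1) (hN (N+k+1) (by omega) bk).choose) k with hbdef
  have hb0' : b 0 = b0 := rfl
  have hbsucc : ∀ k, b (k+1) = max (b k + 1) (hN (N+k+1) (by omega) (b k)).choose :=
    fun k => rfl
  have hblt : ∀ k, b k < b (k+1) := by
    intro k
    have := hbsucc k
    omega
  have hbmono : Monotone b := (strictMono_nat_of_lt_succ hblt).monotone
  have hbk : ∀ k, k ≤ b k := by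
    intro k
    induction k with
    | zero => exact Nat.zero_le _
    | succ k ih => have := hblt k; omega
  have hfit' : ∀ k, l (N+k+1) ≤ ∑ j ∈ Finset.Ioc (b k) (b (k+1)), m j := by
    intro k
    refine (hN (N+k+1) (by omega) (b k)).choose_spec.trans ?_
    refine Finset.sum_le_sum_of_subset (Finset.Ioc_subset_Ioc_right ?_)
    have := hbsucc k
    omega
  have hfitn : ∀ n, N < n → l n ≤ ∑ j ∈ Finset.Ioc (b (n-N-1)) (b (n-N)), m j := by
    intro n hn
    have h2 : n - N = (n - N - 1) + 1 := by omega
    have h1 : n = N + (n-N-1) + 1 := by omega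
    rw [h2]
    conv_lhs => rw [h1]
    exact hfit' (n-N-1)
  have hcard0 : #{p : Σ n : ℕ, Quotient.out (l n) // p.1 ≤ N}
      ≤ #{q : Σ n : ℕ, Quotient.out (m n) // q.1 ≤ b 0} := by
    rw [mk_prefix, mk_prefix, hb0']
    exact hb0
  obtain ⟨e0⟩ := (Cardinal.le_def _ _).1 hcard0
  have E : ∀ n, N < n → (Quotient.out (l n) ↪
      {q : Σ j : ℕ, Quotient.out (m j) // q.1 ∈ Finset.Ioc (b (n-N-1)) (b (n-N))}) := by
    intro n hn
    refine Classical.choice ((Cardinal.le_def _ _).1 ?_)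
    rw [Cardinal.mk_out, mk_part]
    exact hfitn n hn
  set u : (Σ n : ℕ, Quotient.out (l n)) → (Σ n : ℕ, Quotient.out (m n)) :=
    fun p => if h : p.1 ≤ N then (e0 ⟨p, h⟩).1 else (E p.1 (not_le.1 h) p.2).1 with hudef
  have hu_le : ∀ p (h : p.1 ≤ N), (u p).1 ≤ b 0 := by
    intro p h
    have hup : u p = (e0 ⟨p, h⟩).1 := dif_pos h
    rw [hup]
    exact (e0 ⟨p, h⟩).2
  have hu_gt : ∀ p (h : N < p.1), b (p.1-N-1) < (u p).1 ∧ (u p).1 ≤ b (p.1-N) := by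
    intro p h
    have hup : u p = (E p.1 h p.2).1 := dif_neg (not_le.2 h)
    rw [hup]
    exact Finset.mem_Ioc.1 (E p.1 h p.2).2
  have hu_le' : ∀ n (x : Quotient.out (l n)) (h : n ≤ N), (u ⟨n, x⟩).1 ≤ b 0 :=
    fun n x h => hu_le ⟨n, x⟩ h
  have hu_gt' : ∀ n (x : Quotient.out (l n)) (h : N < n),
      b (n-N-1) < (u ⟨n, x⟩).1 ∧ (u ⟨n, x⟩).1 ≤ b (n-N) :=
    fun n x h => hu_gt ⟨n, x⟩ h
  have huinj : Function.Injective u := by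
    rintro ⟨n, x⟩ ⟨n', y⟩ h
    have hcc : (u ⟨n, x⟩).1 = (u ⟨n', y⟩).1 := congrArg Sigma.fst h
    by_cases h1 : n ≤ N <;> by_cases h2 : n' ≤ N
    · have e1 : u ⟨n,x⟩ = (e0 ⟨⟨n,x⟩, h1⟩).1 := dif_pos h1
      have e2 : u ⟨n',y⟩ = (e0 ⟨⟨n',y⟩, h2⟩).1 := dif_pos h2
      rw [e1, e2] at h
      have := e0.injective (Subtype.ext h)
      exact congrArg Subtype.val this
    · exfalso
      have a1 := hu_le' n x h1
      have a2 := (hu_gt' n' y (not_le.1 h2)).1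
      have a3 : b 0 ≤ b (n' - N - 1) := hbmono (Nat.zero_le _)
      omega
    · exfalso
      have a1 := hu_le' n' y h2
      have a2 := (hu_gt' n x (not_le.1 h1)).1
      have a3 : b 0 ≤ b (n - N - 1) := hbmono (Nat.zero_le _)
      omega
    · have hn := not_le.1 h1
      have hn' := not_le.1 h2
      have a1 := hu_gt' n x hn
      have a2 := hu_gt' n' y hn'
      have hnn : n = n' := by
        rcases lt_trichotomy n n' with hl | he | hl
        · exfalso
          have hm : b (n - N) ≤ b (n' - N - 1) := hbmono (by omega)
          omega
        · exact he
        · exfalso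
          have hm : b (n' - N) ≤ b (n - N - 1) := hbmono (by omega)
          omega
      subst hnn
      have e1 : u ⟨n,x⟩ = (E n hn x).1 := dif_neg h1
      have e2 : u ⟨n,y⟩ = (E n hn y).1 := dif_neg h1
      rw [e1, e2] at h
      have := (E n hn).injective (Subtype.ext h)
      exact congrArg (Sigma.mk n) this
  refine ⟨u, huinj, fun M => ⟨max (b M) (N + M), fun p => ⟨?_, ?_⟩⟩⟩
  · intro hpM
    by_cases h1 : p.1 ≤ N
    · have := hu_le p h1
      have h3 : b 0 ≤ b M := hbmono (Nat.zero_le _)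
      have := le_max_left (b M) (N + M)
      omega
    · have h2 := (hu_gt p (not_le.1 h1)).2
      have h3 : b (p.1 - N) ≤ b M := hbmono (by omega)
      have := le_max_left (b M) (N + M)
      omega
  · intro hpM
    by_cases h1 : p.1 ≤ N
    · have := le_max_right (b M) (N + M)
      omega
    · have h2 := (hu_gt p (not_le.1 h1)).1
      have h3 := hbk (p.1 - N - 1)
      have := le_max_right (b M) (N + M)
      omega

lemma goodPair {l m : ℕ → Cardinal.{u}}
    (hu : ∃ u, GoodMap l m u) (hv : ∃ v, GoodMap m l v) : CardSeqEquiv l m := by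
  obtain ⟨u, huinj, huB⟩ := hu
  obtain ⟨v, hvinj, hvB⟩ := hv
  obtain ⟨e, he⟩ := my_sb huinj hvinj
  refine ⟨e, fun M => ?_⟩
  obtain ⟨Mu, hMu⟩ := huB M
  obtain ⟨Mv, hMv⟩ := hvB M
  refine ⟨max Mu Mv, fun p hp => ?_, fun q hq => ?_⟩
  · rcases he p with h | h
    · rw [h]
      exact le_trans ((hMu p).1 hp) (le_max_left _ _)
    · have hvp : (v (e p)).1 ≤ M := by rw [h]; exact hp
      exact le_trans ((hMv (e p)).2 hvp) (le_max_right _ _)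
  · rcases he (e.symm q) with h | h
    · rw [e.apply_symm_apply] at h
      have hup : (u (e.symm q)).1 ≤ M := by rw [← h]; exact hq
      exact le_trans ((hMu (e.symm q)).2 hup) (le_max_left _ _)
    · rw [e.apply_symm_apply] at h
      have hvq := (hMv q).1 hq
      rw [h] at hvq
      exact le_trans hvq (le_max_right _ _)

/-! ### Main theorem -/

theorem cardSeqEquiv_iff (l m : ℕ → Cardinal) :
    CardSeqEquiv l m ↔
      ((∃ N : ℕ, ∀ n ≥ N, l n = 0) ↔ (∃ N : ℕ, ∀ n ≥ N, m n = 0)) ∧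
      (∀ κ : Cardinal, Cardinal.aleph0 ≤ κ →
        ((∃ N : ℕ, ∀ n ≥ N, l n < κ) ↔ (∃ N : ℕ, ∀ n ≥ N, m n < κ))) ∧
      (∀ M : ℕ, ∃ M' : ℕ,
        (∑ n ∈ Finset.range (M + 1), l n) ≤ (∑ n ∈ Finset.range (M' + 1), m n) ∧
        (∑ n ∈ Finset.range (M + 1), m n) ≤ (∑ n ∈ Finset.range (M' + 1), l n)) := by
  constructor
  · intro h
    refine ⟨⟨fwd_zero h, fwd_zero h.symm'⟩,
      fun κ hκ => ⟨fwd_kappa h hκ, fwd_kappa h.symm' hκ⟩, fwd_sum h⟩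
  · rintro ⟨ha, hb, hc⟩
    have hfit_lm := claim_plus ha.mpr (fun κ hκ => (hb κ hκ).mpr)
    have hfit_ml := claim_plus ha.mp (fun κ hκ => (hb κ hκ).mp)
    have hpre_lm : ∀ M, ∃ M',
        (∑ n ∈ Finset.range (M + 1), l n) ≤ ∑ n ∈ Finset.range (M' + 1), m n :=
      fun M => (hc M).imp fun M' h => h.1
    have hpre_ml : ∀ M, ∃ M',
        (∑ n ∈ Finset.range (M + 1), m n) ≤ ∑ n ∈ Finset.range (M' + 1), l n :=
      fun M => (hc M).imp fun M' h => h.2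
    exact goodPair (exists_goodMap hfit_lm hpre_lm) (exists_goodMap hfit_ml hpre_ml)
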